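/- Let λ > 0, let f : [1, ∞) → ℝ be a nonnegative continuously differentiable function, and let h : [1, ∞) → ℝ be a nonnegative Lebesgue-integrable function such that f(t)·f'(t) ≥ λ·f(t)² − h(t) for all t ≥ 1, and suppose ∫_{[1,∞)} f(t)²/t² dt < ∞. Then for every t ≥ 1 one has f(t)² + 2λ·∫_{[t,∞)} f(s)² ds ≤ 2·∫_{[t,∞)} h(s) ds. -/

import Mathlib

open MeasureTheory Set

set_option maxHeartbeats 1600000 in
/-- Estimate (III.6.7) of Lemma III.6.1: if `f ≥ 0` is `C¹` on `[1, ∞)`, `h ≥ 0` is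
integrable, `f f' ≥ λ f² − h` on `[1, ∞)`, and `∫ f²/t² < ∞`, then for every `t ≥ 1`,
`f(t)² + 2λ ∫_{[t,∞)} f² ≤ 2 ∫_{[t,∞)} h`. -/
theorem negative_spectrum_bound (lam : ℝ) (hlam : 0 < lam) (f f' h : ℝ → ℝ)
    (hf0 : ∀ t ∈ Ici (1 : ℝ), 0 ≤ f t)
    (hderiv : ∀ t ∈ Ici (1 : ℝ), HasDerivAt f (f' t) t)
    (hcont : ContinuousOn f' (Ici (1 : ℝ)))
    (hh0 : ∀ t ∈ Ici (1 : ℝ), 0 ≤ h t)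
    (hhint : IntegrableOn h (Ici (1 : ℝ)))
    (hineq : ∀ t ∈ Ici (1 : ℝ), lam * (f t) ^ 2 - h t ≤ f t * f' t)
    (hint : IntegrableOn (fun t => (f t) ^ 2 / t ^ 2) (Ici (1 : ℝ))) :
    ∀ t ∈ Ici (1 : ℝ),
      (f t) ^ 2 + 2 * lam * ∫ s in Ici t, (f s) ^ 2 ≤ 2 * ∫ s in Ici t, h s := by
  intro t ht
  have ht1 : (1 : ℝ) ≤ t := ht
  set g : ℝ → ℝ := fun s => f s ^ 2 with hgdef
  have hfc : ContinuousOn f (Ici (1 : ℝ)) := fun s hs =>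
    (hderiv s hs).continuousAt.continuousWithinAt
  have hgc : ContinuousOn g (Ici (1 : ℝ)) := hfc.pow 2
  have hgderiv : ∀ s ∈ Ici (1 : ℝ), HasDerivAt g (2 * (f s * f' s)) s := by
    intro s hs
    have h2 := (hderiv s hs).pow 2
    simpa [mul_comm, mul_assoc, mul_left_comm] using (show HasDerivAt g _ s from h2)
  set H : ℝ := ∫ s in Ici t, h s with hHdef
  clear_value H
  have hIci_sub : Ici t ⊆ Ici (1 : ℝ) := Ici_subset_Ici.mpr ht1
  have hhint_t : IntegrableOn h (Ici t) := hhint.mono_set hIci_sub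
  have hHnonneg : 0 ≤ H := by
    rw [hHdef]
    exact setIntegral_nonneg measurableSet_Ici (fun s hs => hh0 s (hIci_sub hs))
  -- interval integrability of `g` on subintervals of `[1, ∞)`
  have hgint : ∀ a b : ℝ, (1 : ℝ) ≤ a → a ≤ b → IntervalIntegrable g volume a b := by
    intro a b h1 hab
    refine (hgc.mono ?_).intervalIntegrable
    rw [uIcc_of_le hab]
    exact fun x hx => le_trans h1 hx.1
  have hg_nonneg : ∀ s : ℝ, 0 ≤ g s := fun s => sq_nonneg (f s)
  -- Step A : fundamental inequality on finite intervals
  have stepA : ∀ T, t ≤ T → g t + 2 * lam * ∫ s in t..T, g s ≤ g T + 2 * H := by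
    intro T hT
    have h1T : (1 : ℝ) ≤ T := le_trans ht1 hT
    have hsub : uIcc t T ⊆ Ici (1 : ℝ) := by
      rw [uIcc_of_le hT]; exact fun x hx => le_trans ht1 hx.1
    have hderivint : IntervalIntegrable (fun s => 2 * (f s * f' s)) volume t T := by
      refine (ContinuousOn.intervalIntegrable ?_)
      exact (continuousOn_const.mul ((hfc.mono hsub).mul (hcont.mono hsub)))
    have hftc : ∫ s in t..T, 2 * (f s * f' s) = g T - g t :=
      intervalIntegral.integral_eq_sub_of_hasDerivAt
        (fun x hx => hgderiv x (hsub hx)) hderivint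
    have hhintTT : IntervalIntegrable h volume t T := by
      rw [intervalIntegrable_iff, uIoc_of_le hT]
      exact hhint_t.mono_set (fun x hx => hx.1.le)
    have hgintTT : IntervalIntegrable g volume t T := hgint t T ht1 hT
    have hlow : IntervalIntegrable (fun s => 2 * (lam * g s - h s)) volume t T := by
      exact (((hgintTT.const_mul lam).sub hhintTT).const_mul 2)
    have hmono : ∫ s in t..T, 2 * (lam * g s - h s) ≤ ∫ s in t..T, 2 * (f s * f' s) := by
      refine intervalIntegral.integral_mono_on hT hlow hderivint ?_
      intro x hx
      have hx1 : x ∈ Ici (1 : ℝ) := le_trans ht1 hx.1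
      have hpt : lam * g x - h x ≤ f x * f' x := hineq x hx1
      linarith
    have hsplit : ∫ s in t..T, 2 * (lam * g s - h s)
        = 2 * lam * (∫ s in t..T, g s) - 2 * ∫ s in t..T, h s := by
      have : (fun s => 2 * (lam * g s - h s))
          = fun s => (2 * lam) * g s - 2 * h s := by
        funext s; ring
      rw [this, intervalIntegral.integral_sub ((hgintTT.const_mul (2 * lam)))
        (hhintTT.const_mul 2), intervalIntegral.integral_const_mul,
        intervalIntegral.integral_const_mul]
    have hhle : ∫ s in t..T, h s ≤ H := by
      rw [hHdef, intervalIntegral.integral_of_le hT]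
      refine setIntegral_mono_set hhint_t ?_ ?_
      · exact (ae_restrict_iff' measurableSet_Ici).mpr
          (Filter.Eventually.of_forall fun s hs => hh0 s (hIci_sub hs))
      · exact Filter.Eventually.of_forall fun s hs => hs.1.le
    rw [hsplit] at hmono
    rw [hftc] at hmono
    linarith
  -- Step B : uniform bound on ∫_t^T g
  have stepB : ∀ T, t ≤ T → ∫ s in t..T, g s ≤ H / lam := by
    by_contra hcon
    push_neg at hcon
    obtain ⟨T₀, hT₀t, hG₀⟩ := hcon
    have h1T₀ : (1 : ℝ) ≤ T₀ := le_trans ht1 hT₀t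
    set G₀ : ℝ := ∫ s in t..T₀, g s with hG₀def
    clear_value G₀
    obtain ⟨m, hmdef⟩ : ∃ m : ℝ, m = 2 * lam * G₀ - 2 * H := ⟨_, rfl⟩
    have hm : 0 < m := by
      have := (div_lt_iff₀ hlam).mp hG₀
      nlinarith [hmdef]
    have hG₀nn : 0 ≤ G₀ := by
      rw [hG₀def]
      exact intervalIntegral.integral_nonneg hT₀t (fun s _ => hg_nonneg s)
    -- claim1 : g is ≥ m beyond T₀
    have claim1 : ∀ T, T₀ ≤ T → m ≤ g T := by
      intro T hTT
      have hA := stepA T (le_trans hT₀t hTT)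
      have hadd : G₀ + ∫ s in T₀..T, g s = ∫ s in t..T, g s := by
        rw [hG₀def]
        exact intervalIntegral.integral_add_adjacent_intervals
          (hgint t T₀ ht1 hT₀t) (hgint T₀ T h1T₀ hTT)
      have hnn : 0 ≤ ∫ s in T₀..T, g s :=
        intervalIntegral.integral_nonneg hTT (fun s _ => hg_nonneg s)
      have hgt : 0 ≤ g t := hg_nonneg t
      have e : lam * ∫ s in t..T, g s = lam * G₀ + lam * ∫ s in T₀..T, g s := by
        rw [← hadd]; ring
      have e2 : 0 ≤ lam * ∫ s in T₀..T, g s := mul_nonneg hlam.le hnn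
      linarith [hA, e, e2, hmdef, hgt]
    -- claim2 : linear lower bound for the integral beyond T₀
    have claim2 : ∀ T, T₀ ≤ T → m * (T - T₀) ≤ ∫ s in T₀..T, g s := by
      intro T hTT
      have h0 := intervalIntegral.integral_mono_on hTT (intervalIntegrable_const (c := m))
        (hgint T₀ T h1T₀ hTT) (fun s hs => claim1 s hs.1)
      rw [intervalIntegral.integral_const, smul_eq_mul] at h0
      rw [mul_comm]; exact h0
    -- claim3 : linear lower bound for g beyond T₀
    have claim3 : ∀ T, T₀ ≤ T → 2 * lam * m * (T - T₀) ≤ g T := by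
      intro T hTT
      have hA := stepA T (le_trans hT₀t hTT)
      have hadd : G₀ + ∫ s in T₀..T, g s = ∫ s in t..T, g s := by
        rw [hG₀def]
        exact intervalIntegral.integral_add_adjacent_intervals
          (hgint t T₀ ht1 hT₀t) (hgint T₀ T h1T₀ hTT)
      have h2 := claim2 T hTT
      have hgt : 0 ≤ g t := hg_nonneg t
      have e : lam * ∫ s in t..T, g s = lam * G₀ + lam * ∫ s in T₀..T, g s := by
        rw [← hadd]; ring
      have e2 : lam * (m * (T - T₀)) ≤ lam * ∫ s in T₀..T, g s :=
        mul_le_mul_of_nonneg_left h2 hlam.le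
      nlinarith [hA, e, e2, hmdef, hgt, hm, hHnonneg]
    -- claim4 : quadratic lower bound for the integral beyond T₀
    have claim4 : ∀ T, T₀ ≤ T → lam * m * (T - T₀) ^ 2 ≤ ∫ s in T₀..T, g s := by
      intro T hTT
      have hlin : IntervalIntegrable (fun s => 2 * lam * m * (s - T₀)) volume T₀ T :=
        (Continuous.intervalIntegrable (by continuity) T₀ T)
      have hmono := intervalIntegral.integral_mono_on hTT hlin
        (hgint T₀ T h1T₀ hTT) (fun s hs => claim3 s hs.1)
      have hcalc : ∫ s in T₀..T, 2 * lam * m * (s - T₀)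
          = lam * m * (T - T₀) ^ 2 := by
        rw [intervalIntegral.integral_const_mul]
        rw [intervalIntegral.integral_sub intervalIntegral.intervalIntegrable_id intervalIntegrable_const]
        rw [integral_id, intervalIntegral.integral_const]
        simp only [smul_eq_mul]
        ring
      rw [hcalc] at hmono
      exact hmono
    -- claim5 : quadratic lower bound for g beyond T₀
    have claim5 : ∀ T, T₀ ≤ T → 2 * lam ^ 2 * m * (T - T₀) ^ 2 - 2 * H ≤ g T := by
      intro T hTT
      have hA := stepA T (le_trans hT₀t hTT)
      have hadd : G₀ + ∫ s in T₀..T, g s = ∫ s in t..T, g s := by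
        rw [hG₀def]
        exact intervalIntegral.integral_add_adjacent_intervals
          (hgint t T₀ ht1 hT₀t) (hgint T₀ T h1T₀ hTT)
      have h4 := claim4 T hTT
      have hgt : 0 ≤ g t := hg_nonneg t
      have e : lam * ∫ s in t..T, g s = lam * G₀ + lam * ∫ s in T₀..T, g s := by
        rw [← hadd]; ring
      have e2 : lam * (lam * m * (T - T₀) ^ 2) ≤ lam * ∫ s in T₀..T, g s :=
        mul_le_mul_of_nonneg_left h4 hlam.le
      nlinarith [hA, e, e2, hmdef, hgt, hm, hHnonneg]
    -- choose T₁ so that g s / s² ≥ lam² m for s ≥ T₁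
    obtain ⟨c, hcdef⟩ : ∃ c : ℝ, c = lam ^ 2 * m := ⟨_, rfl⟩
    have hc : 0 < c := by rw [hcdef]; positivity
    obtain ⟨T₁, hT₁def⟩ : ∃ T₁ : ℝ, T₁ = 5 * T₀ + 2 * H / c + 1 := ⟨_, rfl⟩
    have hT₀pos : (0 : ℝ) < T₀ := lt_of_lt_of_le one_pos h1T₀
    have hHc : 0 ≤ 2 * H / c := by positivity
    have hT₁T₀ : T₀ ≤ T₁ := by rw [hT₁def]; linarith
    have h1T₁ : (1 : ℝ) ≤ T₁ := le_trans h1T₀ hT₁T₀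
    have claim6 : ∀ s, T₁ ≤ s → c ≤ g s / s ^ 2 := by
      intro s hs
      have hsT₀ : T₀ ≤ s := le_trans hT₁T₀ hs
      have h5 := claim5 s hsT₀
      have hT₁s : 5 * T₀ + 2 * H / c + 1 ≤ s := by rw [hT₁def] at hs; exact hs
      have hspos : (0 : ℝ) < s := lt_of_lt_of_le (lt_of_lt_of_le one_pos h1T₁) hs
      have h2Hc : 2 * H / c ≤ s := by linarith
      have hsH : 2 * H ≤ c * s := by
        rw [div_le_iff₀ hc] at h2Hc
        linarith [h2Hc]
      have hs5 : 5 * T₀ ≤ s := by linarith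
      have hpos2 : s ≤ s ^ 2 - 4 * s * T₀ + 2 * T₀ ^ 2 := by
        have e1 : 5 * T₀ * s ≤ s * s := mul_le_mul_of_nonneg_right hs5 hspos.le
        have e2 : s * 1 ≤ s * T₀ := mul_le_mul_of_nonneg_left h1T₀ hspos.le
        nlinarith [e1, e2, sq_nonneg T₀]
      have hkey : c * s ^ 2 ≤ g s := by
        have hexp : 2 * lam ^ 2 * m * (s - T₀) ^ 2 - c * s ^ 2
            = c * (s ^ 2 - 4 * s * T₀ + 2 * T₀ ^ 2) := by rw [hcdef]; ring
        have hc2 : c * s ≤ c * (s ^ 2 - 4 * s * T₀ + 2 * T₀ ^ 2) :=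
          mul_le_mul_of_nonneg_left hpos2 hc.le
        linarith [h5, hexp, hc2, hsH]
      rw [le_div_iff₀ (by positivity : (0:ℝ) < s ^ 2)]
      exact hkey
    -- derive a contradiction with the integrability of g s / s²
    set K : ℝ := ∫ s in Ici (1:ℝ), g s / s ^ 2 with hKdef
    clear_value K
    have hKnn : 0 ≤ K := by
      rw [hKdef]
      exact setIntegral_nonneg measurableSet_Ici (fun s hs => by positivity)
    obtain ⟨T₂, hT₂def⟩ : ∃ T₂ : ℝ, T₂ = T₁ + (K + 1) / c := ⟨_, rfl⟩
    have hT₂T₁ : T₁ ≤ T₂ := by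
      have : 0 ≤ (K + 1) / c := by positivity
      rw [hT₂def]; linarith
    have hq_int : IntervalIntegrable (fun s => g s / s ^ 2) volume T₁ T₂ := by
      rw [intervalIntegrable_iff, uIoc_of_le hT₂T₁]
      exact hint.mono_set (fun x hx => le_trans h1T₁ hx.1.le)
    have hlow : c * (T₂ - T₁) ≤ ∫ s in T₁..T₂, g s / s ^ 2 := by
      have h0 := intervalIntegral.integral_mono_on hT₂T₁ (intervalIntegrable_const (c := c))
        hq_int (fun s hs => claim6 s hs.1)
      rw [intervalIntegral.integral_const, smul_eq_mul] at h0
      rw [mul_comm]; exact h0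
    have hup : ∫ s in T₁..T₂, g s / s ^ 2 ≤ K := by
      rw [hKdef, intervalIntegral.integral_of_le hT₂T₁]
      refine setIntegral_mono_set hint ?_ ?_
      · exact (ae_restrict_iff' measurableSet_Ici).mpr
          (Filter.Eventually.of_forall fun s hs => by positivity)
      · exact Filter.Eventually.of_forall fun s hs => le_trans h1T₁ hs.1.le
    have hTdiff : c * (T₂ - T₁) = K + 1 := by
      rw [hT₂def]
      field_simp
      ring
    rw [hTdiff] at hlow
    linarith
  -- g is integrable on (t, ∞)
  have hgIoi : IntegrableOn g (Ioi t) := by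
    refine integrableOn_Ioi_of_intervalIntegral_norm_bounded (l := Filter.atTop)
      (μ := volume) (H / lam) t (f := g) (b := fun n : ℕ => t + n) ?_ ?_ ?_
    · intro n
      exact ((hgc.mono (fun x (hx : x ∈ Icc t (t + (n:ℝ))) =>
        le_trans ht1 hx.1)).integrableOn_Icc).mono_set Ioc_subset_Icc_self
    · exact Filter.tendsto_atTop_add_const_left _ t tendsto_natCast_atTop_atTop
    · refine Filter.Eventually.of_forall fun n => ?_
      have hTn : t ≤ t + (n : ℝ) := le_add_of_nonneg_right (Nat.cast_nonneg n)
      have hcongr : ∫ x in t..(t + (n:ℝ)), ‖g x‖ = ∫ x in t..(t + (n:ℝ)), g x := by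
        refine intervalIntegral.integral_congr fun x _ => ?_
        exact Real.norm_of_nonneg (hg_nonneg x)
      rw [hcongr]
      exact stepB _ hTn
  -- choose a sequence along which g tends to 0
  have hseq : ∀ n : ℕ, ∃ T, max t n ≤ T ∧ g T < 1 / (n + 1) := by
    intro n
    by_contra hno
    push_neg at hno
    set a : ℝ := max t n with hadef
    have hta : t ≤ a := le_max_left _ _
    have h1a : (1:ℝ) ≤ a := le_trans ht1 hta
    obtain ⟨S, hSdef⟩ : ∃ S : ℝ, S = a + ((n : ℝ) + 1) * (H / lam + 1) := ⟨_, rfl⟩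
    have hHl : 0 ≤ H / lam := by positivity
    have hn1 : (0:ℝ) ≤ ((n : ℝ) + 1) * (H / lam + 1) := by positivity
    have haS : a ≤ S := by rw [hSdef]; linarith
    have hlow : (1 / ((n:ℝ) + 1)) * (S - a) ≤ ∫ s in a..S, g s := by
      have h0 := intervalIntegral.integral_mono_on haS (intervalIntegrable_const (c := 1 / ((n:ℝ) + 1)))
        (hgint a S h1a haS) (fun s hs => hno s hs.1)
      rw [intervalIntegral.integral_const, smul_eq_mul] at h0
      rw [mul_comm]; exact h0
    have hadd : (∫ s in t..a, g s) + ∫ s in a..S, g s = ∫ s in t..S, g s :=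
      intervalIntegral.integral_add_adjacent_intervals
        (hgint t a ht1 hta) (hgint a S h1a haS)
    have hnn : 0 ≤ ∫ s in t..a, g s :=
      intervalIntegral.integral_nonneg hta (fun s _ => hg_nonneg s)
    have hB := stepB S (le_trans hta haS)
    have hcalc : (1 / ((n:ℝ) + 1)) * (S - a) = H / lam + 1 := by
      rw [hSdef]
      have hne : ((n:ℝ) + 1) ≠ 0 := by positivity
      field_simp
      ring
    rw [hcalc] at hlow
    linarith
  choose T hT₁ hT₂ using hseq
  have hTt : ∀ n, t ≤ T n := fun n => le_trans (le_max_left _ _) (hT₁ n)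
  have hTtend : Filter.Tendsto T Filter.atTop Filter.atTop := by
    refine Filter.tendsto_atTop_mono (fun n => le_trans (le_max_right t n) (hT₁ n)) ?_
    exact tendsto_natCast_atTop_atTop
  have hIntTendsto : Filter.Tendsto (fun n => ∫ s in t..(T n), g s) Filter.atTop
      (nhds (∫ s in Ioi t, g s)) :=
    intervalIntegral_tendsto_integral_Ioi t hgIoi hTtend
  have hLHS : Filter.Tendsto (fun n => g t + 2 * lam * ∫ s in t..(T n), g s)
      Filter.atTop (nhds (g t + 2 * lam * ∫ s in Ioi t, g s)) :=
    (hIntTendsto.const_mul (2 * lam)).const_add (g t)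
  have hRHS : Filter.Tendsto (fun n : ℕ => 1 / ((n:ℝ) + 1) + 2 * H)
      Filter.atTop (nhds (0 + 2 * H)) :=
    tendsto_one_div_add_atTop_nhds_zero_nat.add_const (2 * H)
  have hle : ∀ n : ℕ, g t + 2 * lam * ∫ s in t..(T n), g s
      ≤ 1 / ((n:ℝ) + 1) + 2 * H := by
    intro n
    have hA := stepA (T n) (hTt n)
    have := hT₂ n
    linarith
  have hfinal : g t + 2 * lam * ∫ s in Ioi t, g s ≤ 0 + 2 * H :=
    le_of_tendsto_of_tendsto' hLHS hRHS hle
  rw [integral_Ici_eq_integral_Ioi]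
  simpa using hfinal
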